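/- arXiv:2103.02427 — 2 statements merged into one kernel-verified Lean document; each statement's English description precedes it below -/
import Mathlib

section
/- Let f(x) = ∑_{i≥1} a_i x^i with a₁ ≠ 1 over a field, and f^(n) its n-fold composition. Then the coefficient of x² in f^(n) equals a₂(a₁^{2n} − a₁^n)/(a₁² − a₁). -/
open PowerSeries Finset

/-- Composition of formal power series (meaningful when `g` has zero constant term):
the coefficient of `x^k` in `f(g(x))` is `∑_{j=0}^{k} f_j · [x^k](g^j)`. -/
noncomputable def pscomp {R : Type*} [CommRing R] (f g : PowerSeries R) : PowerSeries R :=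
  PowerSeries.mk fun k =>
    ∑ j ∈ Finset.range (k + 1), (PowerSeries.coeff j f) * (PowerSeries.coeff k (g ^ j))

/-- The `n`-fold composition `f^(n)`: `f^(1) = f`, `f^(n) = f^(n-1) ∘ f`. -/
noncomputable def psiter {R : Type*} [CommRing R] (f : PowerSeries R) : ℕ → PowerSeries R
  | 0 => PowerSeries.X
  | 1 => f
  | (n + 2) => pscomp (psiter f (n + 1)) f

lemma coeff_pscomp {R : Type*} [CommRing R] (f g : PowerSeries R) (k : ℕ) :
    PowerSeries.coeff k (pscomp f g) =
      ∑ j ∈ Finset.range (k + 1), (PowerSeries.coeff j f) * (PowerSeries.coeff k (g ^ j)) := by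
  simp [pscomp]

lemma psiter_succ_succ {R : Type*} [CommRing R] (f : PowerSeries R) (n : ℕ) (hn : 1 ≤ n) :
    psiter f (n + 1) = pscomp (psiter f n) f := by
  obtain ⟨m, rfl⟩ := Nat.exists_eq_add_of_le hn
  rw [show 1 + m + 1 = m + 2 by ring, show 1 + m = m + 1 by ring]; rfl

lemma coeff2_sq {K : Type*} [Field K] (a : ℕ → K) (h0 : a 0 = 0) :
    PowerSeries.coeff 2 ((PowerSeries.mk a) ^ 2) = a 1 ^ 2 := by
  rw [sq, PowerSeries.coeff_mul, Finset.Nat.sum_antidiagonal_eq_sum_range_succ_mk]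
  simp [Finset.sum_range_succ, h0, sq]

lemma coeff1_iter {K : Type*} [Field K] (a : ℕ → K) (n : ℕ) (hn : 1 ≤ n) :
    PowerSeries.coeff 1 (psiter (PowerSeries.mk a) n) = a 1 ^ n := by
  induction n, hn using Nat.le_induction with
  | base => simp [psiter]
  | succ n hn ih =>
    rw [psiter_succ_succ _ _ hn, coeff_pscomp]
    simp [Finset.sum_range_succ, ih, pow_succ]

/-- Muckenhoupt's Lemma: if `a₁ ∉ {0, 1}`, the coefficient of `x²` in `f^(n)`
equals `a₂(a₁^{2n} − a₁^n)/(a₁² − a₁)`. -/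
theorem muckenhoupt {K : Type*} [Field K] (a : ℕ → K) (h0 : a 0 = 0)
    (ha0 : a 1 ≠ 0) (ha1 : a 1 ≠ 1) (n : ℕ) (hn : 1 ≤ n) :
    PowerSeries.coeff 2 (psiter (PowerSeries.mk a) n) =
      a 2 * (a 1 ^ (2 * n) - a 1 ^ n) / (a 1 ^ 2 - a 1) := by
  have hden : a 1 ^ 2 - a 1 ≠ 0 := by
    intro h
    have : a 1 * (a 1 - 1) = 0 := by ring_nf; linear_combination h
    rcases mul_eq_zero.mp this with h' | h'
    · exact ha0 h'
    · exact ha1 (sub_eq_zero.mp h')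
  induction n, hn using Nat.le_induction with
  | base =>
    show PowerSeries.coeff 2 (psiter (PowerSeries.mk a) 1) = _
    simp only [psiter, coeff_mk]
    field_simp
    ring
  | succ n hn ih =>
    rw [psiter_succ_succ _ _ hn, coeff_pscomp]
    simp only [Finset.sum_range_succ, Finset.sum_range_zero, pow_zero, pow_one,
      PowerSeries.coeff_one, coeff2_sq a h0, coeff_mk, ih, coeff1_iter a n hn]
    field_simp
    rw [if_neg (by norm_num : (2:ℕ) ≠ 0)]
    ring
end

section
/- Let f(x) = x + a₂x² + a₃x³ + a₄x⁴ + a₅x⁵ + ⋯ (with a₁ = 1) and f^(n) its n-fold composition. Then f_5^(n) = C(n,1) a₅ + C(n,2)(5 a₂² a₃ + 6 a₂ a₄ + 3 a₃²) + C(n,3)(10 a₂⁴ + 26 a₂² a₃) + 24 C(n,4) a₂⁴. -/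
open PowerSeries Finset

set_option maxHeartbeats 1000000

section Aux
variable {R : Type*} [CommRing R] (a : ℕ → R) (h0 : a 0 = 0) (h1 : a 1 = 1)
include h0 h1

private lemma c22 : coeff 2 ((mk a)^2) = 1 := by
  simp [pow_succ, coeff_mul, Finset.Nat.sum_antidiagonal_eq_sum_range_succ_mk,
    Finset.sum_range_succ, h0, h1]
private lemma c32 : coeff 3 ((mk a)^2) = 2 * a 2 := by
  simp [pow_succ, coeff_mul, Finset.Nat.sum_antidiagonal_eq_sum_range_succ_mk,
    Finset.sum_range_succ, h0, h1]; ring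
private lemma c33 : coeff 3 ((mk a)^3) = 1 := by
  simp [pow_succ, coeff_mul, Finset.Nat.sum_antidiagonal_eq_sum_range_succ_mk,
    Finset.sum_range_succ, h0, h1]
private lemma c42 : coeff 4 ((mk a)^2) = 2 * a 3 + a 2 ^ 2 := by
  simp [pow_succ, coeff_mul, Finset.Nat.sum_antidiagonal_eq_sum_range_succ_mk,
    Finset.sum_range_succ, h0, h1]; ring
private lemma c43 : coeff 4 ((mk a)^3) = 3 * a 2 := by
  simp [pow_succ, coeff_mul, Finset.Nat.sum_antidiagonal_eq_sum_range_succ_mk,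
    Finset.sum_range_succ, h0, h1]; ring
private lemma c44 : coeff 4 ((mk a)^4) = 1 := by
  simp [pow_succ, coeff_mul, Finset.Nat.sum_antidiagonal_eq_sum_range_succ_mk,
    Finset.sum_range_succ, h0, h1]
private lemma c52 : coeff 5 ((mk a)^2) = 2 * a 4 + 2 * a 2 * a 3 := by
  simp [pow_succ, coeff_mul, Finset.Nat.sum_antidiagonal_eq_sum_range_succ_mk,
    Finset.sum_range_succ, h0, h1]; ring
private lemma c53 : coeff 5 ((mk a)^3) = 3 * a 3 + 3 * a 2 ^ 2 := by
  simp [pow_succ, coeff_mul, Finset.Nat.sum_antidiagonal_eq_sum_range_succ_mk,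
    Finset.sum_range_succ, h0, h1]; ring
private lemma c54 : coeff 5 ((mk a)^4) = 4 * a 2 := by
  simp [pow_succ, coeff_mul, Finset.Nat.sum_antidiagonal_eq_sum_range_succ_mk,
    Finset.sum_range_succ, h0, h1]; ring
private lemma c55 : coeff 5 ((mk a)^5) = 1 := by
  simp [pow_succ, coeff_mul, Finset.Nat.sum_antidiagonal_eq_sum_range_succ_mk,
    Finset.sum_range_succ, h0, h1]

private lemma key (n : ℕ) (hn : 1 ≤ n) :
    coeff 0 (psiter (mk a) n) = 0 ∧
    coeff 1 (psiter (mk a) n) = 1 ∧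
    coeff 2 (psiter (mk a) n) = (n.choose 1 : R) * a 2 ∧
    coeff 3 (psiter (mk a) n) = (n.choose 1 : R) * a 3 + 2 * (n.choose 2 : R) * a 2 ^ 2 ∧
    coeff 4 (psiter (mk a) n) = (n.choose 1 : R) * a 4 + 5 * (n.choose 2 : R) * a 2 * a 3
      + ((n.choose 2 : R) + 6 * (n.choose 3 : R)) * a 2 ^ 3 ∧
    coeff 5 (psiter (mk a) n) =
      (n.choose 1 : R) * a 5
        + (n.choose 2 : R) * (5 * a 2 ^ 2 * a 3 + 6 * a 2 * a 4 + 3 * a 3 ^ 2)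
        + (n.choose 3 : R) * (10 * a 2 ^ 4 + 26 * a 2 ^ 2 * a 3)
        + 24 * (n.choose 4 : R) * a 2 ^ 4 := by
  induction n, hn using Nat.le_induction with
  | base =>
    simp [psiter, h0, h1]
    norm_num [Nat.choose]
  | succ n hn ih =>
    obtain ⟨n, rfl⟩ : ∃ m, n = m + 1 := ⟨n - 1, by omega⟩
    obtain ⟨i0, i1, i2, i3, i4, i5⟩ := ih
    have hstep : psiter (mk a) (n + 1 + 1) = pscomp (psiter (mk a) (n + 1)) (mk a) := rfl
    have e2 : ((n+1+1).choose 2 : R) = ((n+1).choose 1 : R) + ((n+1).choose 2 : R) := by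
      rw [Nat.choose_succ_succ]; push_cast; ring
    have e3 : ((n+1+1).choose 3 : R) = ((n+1).choose 2 : R) + ((n+1).choose 3 : R) := by
      rw [Nat.choose_succ_succ]; push_cast; ring
    have e4 : ((n+1+1).choose 4 : R) = ((n+1).choose 3 : R) + ((n+1).choose 4 : R) := by
      rw [Nat.choose_succ_succ]; push_cast; ring
    rw [hstep]
    refine ⟨?_, ?_, ?_, ?_, ?_, ?_⟩ <;>
    · rw [pscomp, coeff_mk]
      simp only [Finset.sum_range_succ, Finset.sum_range_zero, pow_zero, pow_one,
        i0, i1, i2, i3, i4, i5, coeff_mk,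
        c22 a h0 h1, c32 a h0 h1, c33 a h0 h1, c42 a h0 h1, c43 a h0 h1, c44 a h0 h1,
        c52 a h0 h1, c53 a h0 h1, c54 a h0 h1, c55 a h0 h1,
        map_one, coeff_one, e2, e3, e4, h0, h1]
      push_cast [Nat.choose_one_right]
      ring

end Aux

/-- Schröder's formula for the fifth coefficient when `a₁ = 1`:
`f_5^(n) = C(n,1) a₅ + C(n,2)(5 a₂² a₃ + 6 a₂ a₄ + 3 a₃²)
  + C(n,3)(10 a₂⁴ + 26 a₂² a₃) + 24 C(n,4) a₂⁴`. -/
theorem schroder_five {R : Type*} [CommRing R] [CharZero R] (a : ℕ → R)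
    (h0 : a 0 = 0) (h1 : a 1 = 1) (n : ℕ) (hn : 1 ≤ n) :
    PowerSeries.coeff 5 (psiter (PowerSeries.mk a) n) =
      (n.choose 1 : R) * a 5
        + (n.choose 2 : R) * (5 * a 2 ^ 2 * a 3 + 6 * a 2 * a 4 + 3 * a 3 ^ 2)
        + (n.choose 3 : R) * (10 * a 2 ^ 4 + 26 * a 2 ^ 2 * a 3)
        + 24 * (n.choose 4 : R) * a 2 ^ 4 :=
  (key a h0 h1 n hn).2.2.2.2.2
end
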